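/- Double null form bound: let 𝔪(ξ,η) = (1/2)(ξ·η^⊥)(ξ·(ξ−2η))/(|η|²|ξ−η|²) for η ≠ 0, ξ−η ≠ 0. Then |𝔪(ξ,η)| ≤ (1/2) |ξ−2η|² |ξ| / (|η| |ξ−η|²). In particular 𝔪 vanishes to second order on the set {ξ = 2η}. -/

import Mathlib

noncomputable def perp (x : EuclideanSpace ℝ (Fin 2)) : EuclideanSpace ℝ (Fin 2) :=
  (WithLp.equiv 2 (Fin 2 → ℝ)).symm ![-x 1, x 0]

/-- The symmetrized symbol `𝔪` of the β-plane nonlinearity. -/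
noncomputable def frakm (ξ η : EuclideanSpace ℝ (Fin 2)) : ℝ :=
  (1 / 2) * ((inner ℝ ξ (perp η) : ℝ) * (inner ℝ ξ (ξ - (2 : ℝ) • η) : ℝ)) /
    (‖η‖ ^ 2 * ‖ξ - η‖ ^ 2)

lemma perp_apply0 (x : EuclideanSpace ℝ (Fin 2)) : perp x 0 = -x 1 := rfl
lemma perp_apply1 (x : EuclideanSpace ℝ (Fin 2)) : perp x 1 = x 0 := rfl

lemma norm_perp (x : EuclideanSpace ℝ (Fin 2)) : ‖perp x‖ = ‖x‖ := by
  simp only [EuclideanSpace.norm_eq, Fin.sum_univ_two, perp_apply0, perp_apply1, norm_neg]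
  rw [add_comm]

lemma inner_self_perp (x : EuclideanSpace ℝ (Fin 2)) : (inner ℝ x (perp x) : ℝ) = 0 := by
  simp only [EuclideanSpace.inner_eq_star_dotProduct]
  simp [dotProduct, Fin.sum_univ_two, perp_apply0, perp_apply1]
  ring

lemma inner_perp_eq (ξ η : EuclideanSpace ℝ (Fin 2)) :
    (inner ℝ ξ (perp η) : ℝ) = inner ℝ (ξ - (2 : ℝ) • η) (perp η) := by
  rw [inner_sub_left, real_inner_smul_left, inner_self_perp]
  ring

theorem double_null_form_bound (ξ η : EuclideanSpace ℝ (Fin 2))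
    (hη : η ≠ 0) (hξη : ξ - η ≠ 0) :
    |frakm ξ η| ≤ (1 / 2) * ‖ξ - (2 : ℝ) • η‖ ^ 2 * ‖ξ‖ / (‖η‖ * ‖ξ - η‖ ^ 2) := by
  have hA : |(inner ℝ ξ (perp η) : ℝ)| ≤ ‖ξ - (2 : ℝ) • η‖ * ‖η‖ := by
    rw [inner_perp_eq]
    calc |(inner ℝ (ξ - (2 : ℝ) • η) (perp η) : ℝ)| ≤ ‖ξ - (2 : ℝ) • η‖ * ‖perp η‖ :=
          abs_real_inner_le_norm _ _
      _ = ‖ξ - (2 : ℝ) • η‖ * ‖η‖ := by rw [norm_perp]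
  have hB : |(inner ℝ ξ (ξ - (2 : ℝ) • η) : ℝ)| ≤ ‖ξ‖ * ‖ξ - (2 : ℝ) • η‖ :=
    abs_real_inner_le_norm _ _
  have hηpos : (0:ℝ) < ‖η‖ := norm_pos_iff.mpr hη
  have hξηpos : (0:ℝ) < ‖ξ - η‖ := norm_pos_iff.mpr hξη
  rw [frakm, abs_div, abs_of_pos (by positivity : (0:ℝ) < ‖η‖ ^ 2 * ‖ξ - η‖ ^ 2)]
  rw [div_le_div_iff₀ (by positivity) (by positivity)]
  have h1 : |(1:ℝ) / 2 * ((inner ℝ ξ (perp η) : ℝ) * (inner ℝ ξ (ξ - (2 : ℝ) • η) : ℝ))|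
      ≤ (1/2) * (‖ξ - (2 : ℝ) • η‖ * ‖η‖ * (‖ξ‖ * ‖ξ - (2 : ℝ) • η‖)) := by
    rw [abs_mul, abs_mul]
    have : |(1:ℝ)/2| = 1/2 := by norm_num
    rw [this]
    gcongr
  calc |(1:ℝ) / 2 * ((inner ℝ ξ (perp η) : ℝ) * (inner ℝ ξ (ξ - (2 : ℝ) • η) : ℝ))| * (‖η‖ * ‖ξ - η‖ ^ 2)
      ≤ (1/2) * (‖ξ - (2 : ℝ) • η‖ * ‖η‖ * (‖ξ‖ * ‖ξ - (2 : ℝ) • η‖)) * (‖η‖ * ‖ξ - η‖ ^ 2) := by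
        gcongr
    _ = 1 / 2 * ‖ξ - (2 : ℝ) • η‖ ^ 2 * ‖ξ‖ * (‖η‖ ^ 2 * ‖ξ - η‖ ^ 2) := by ring
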